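/- Let n ≥ 2 and 1 ≤ a ≤ n−1, and let α, α' lie in the submonoid of B_n generated by σ_{a+1},…,σ_{n−1}. Then tr_n^0(ασ_aα') = z·tr_n^0(αα'). Consequently (the values in question lying in ℤ[q,z]), the evaluation at z = 0 of tr_n^0(ασ_aα') is 0, and the evaluation at z = 0 of tr_n^0(ασ_a²α') equals q times the evaluation at z = 0 of tr_n^0(αα'). -/

import Mathlib

noncomputable section
open scoped Classical

/-- `𝕂 = ℂ(q)`. -/
abbrev K : Type := RatFunc ℂ
/-- `𝕂(z)`. -/
abbrev Kz : Type := RatFunc K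
/-- the variable `q`. -/
def q : K := RatFunc.X
/-- the variable `z`. -/
def z : Kz := RatFunc.X

/-- The braid relations, as elements of the free group on `σ_1, …, σ_{n-1}`
(0-indexed `i ↔ σ_{i+1}`). -/
def braidRels (n : ℕ) : Set (FreeGroup (Fin (n - 1))) :=
  {r | (∃ i j : Fin (n - 1), ((i : ℕ) + 1 = (j : ℕ) ∨ (j : ℕ) + 1 = (i : ℕ)) ∧
          r = FreeGroup.of i * FreeGroup.of j * FreeGroup.of i *
              (FreeGroup.of j * FreeGroup.of i * FreeGroup.of j)⁻¹) ∨
       (∃ i j : Fin (n - 1), ((i : ℕ) + 2 ≤ (j : ℕ) ∨ (j : ℕ) + 2 ≤ (i : ℕ)) ∧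
          r = FreeGroup.of i * FreeGroup.of j * (FreeGroup.of j * FreeGroup.of i)⁻¹)}

/-- The braid group `B_n` on `n` strands. -/
def BG (n : ℕ) : Type := PresentedGroup (braidRels n)

instance (n : ℕ) : Group (BG n) := inferInstanceAs (Group (PresentedGroup _))

/-- The standard generator `σ_{i+1}` of the braid group. -/
def bgen {n : ℕ} (i : Fin (n - 1)) : BG n := PresentedGroup.of i

lemma bgen_braid {m : ℕ} (i j : Fin (m - 1)) (h : (i : ℕ) + 1 = (j : ℕ) ∨ (j : ℕ) + 1 = (i : ℕ)) :
    bgen (n := m) i * bgen j * bgen i = bgen j * bgen i * bgen j := by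
  have key : PresentedGroup.mk (braidRels m)
      (FreeGroup.of i * FreeGroup.of j * FreeGroup.of i *
        (FreeGroup.of j * FreeGroup.of i * FreeGroup.of j)⁻¹) = 1 :=
    (QuotientGroup.eq_one_iff _).mpr (Subgroup.subset_normalClosure (Or.inl ⟨i, j, h, rfl⟩))
  rw [map_mul, map_inv, mul_inv_eq_one] at key
  exact key

lemma bgen_comm {m : ℕ} (i j : Fin (m - 1)) (h : (i : ℕ) + 2 ≤ (j : ℕ) ∨ (j : ℕ) + 2 ≤ (i : ℕ)) :
    bgen (n := m) i * bgen j = bgen j * bgen i := by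
  have key : PresentedGroup.mk (braidRels m)
      (FreeGroup.of i * FreeGroup.of j * (FreeGroup.of j * FreeGroup.of i)⁻¹) = 1 :=
    (QuotientGroup.eq_one_iff _).mpr (Subgroup.subset_normalClosure (Or.inr ⟨i, j, h, rfl⟩))
  rw [map_mul, map_inv, mul_inv_eq_one] at key
  exact key

/-- The standard inclusion `B_n → B_{n+1}`. -/
def inclB {n : ℕ} : BG n →* BG (n + 1) :=
  PresentedGroup.toGroup (f := fun i : Fin (n - 1) => bgen (Fin.castLE (by omega) i))
    (by
      rintro r (⟨i, j, hij, rfl⟩ | ⟨i, j, hij, rfl⟩) <;>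
        simp only [map_mul, map_inv, FreeGroup.lift_apply_of, mul_inv_eq_one]
      · exact bgen_braid _ _ (by simpa using hij)
      · exact bgen_comm _ _ (by simpa using hij))

/-- The positive braid monoid `B_n⁺`, the submonoid of `B_n` generated by the `σ_i`. -/
def Bplus (n : ℕ) : Submonoid (BG n) := Submonoid.closure (Set.range (bgen (n := n)))

/-- The monoid algebra `𝕂[B_n]`. -/
abbrev MAB (n : ℕ) : Type := MonoidAlgebra K (BG n)

/-- The Hecke relations `σ_k² = (q-1)σ_k + q`. -/
def hrelB (n : ℕ) : MAB n → MAB n → Prop := fun x y =>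
  ∃ i : Fin (n - 1), x = (MonoidAlgebra.of K (BG n) (bgen i)) ^ 2 ∧
    y = (q - 1) • MonoidAlgebra.of K (BG n) (bgen i) + q • 1

/-- The Hecke algebra `H(B_n)` of the braid group / symmetric group. -/
def HB (n : ℕ) : Type := RingQuot (hrelB n)

instance (n : ℕ) : Ring (HB n) := inferInstanceAs (Ring (RingQuot (hrelB n)))
instance (n : ℕ) : Algebra K (HB n) := inferInstanceAs (Algebra K (RingQuot (hrelB n)))

/-- The natural map `B_n → H(B_n)`. -/
def ιHB {n : ℕ} (β : BG n) : HB n := RingQuot.mkAlgHom K (hrelB n) (MonoidAlgebra.of K (BG n) β)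

/-- The generator `σ_n` of `B_{n+2}` (0-indexed `n`), used in the Markov condition. -/
def lastGenB (n : ℕ) : Fin ((n + 2) - 1) := ⟨n, by omega⟩

/-- A collection of 𝕂-linear maps `H(B_n) → 𝕂(z)`, `n ≥ 1`
(index `n` in the collection corresponds to `n+1` strands). -/
abbrev TRBc : Type := ∀ n : ℕ, HB (n + 1) →ₗ[K] Kz

/-- The Markov trace conditions for the tower of Hecke algebras `{H(B_n)}ₙ`. -/
def IsMarkovB (T : TRBc) : Prop :=
  (∀ (n : ℕ) (α β : BG (n + 1)), T n (ιHB (α * β)) = T n (ιHB (β * α))) ∧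
  (∀ (n : ℕ) (β : BG (n + 1)), T (n + 1) (ιHB (inclB β)) = T n (ιHB β)) ∧
  (∀ (n : ℕ) (β : BG (n + 1)),
    T (n + 1) (ιHB (inclB β * bgen (lastGenB n))) = z * T n (ιHB β))

/-- The subring `ℤ[q] ⊆ 𝕂`. -/
def Zq : Subring K := Subring.closure {q}

/-- The subring `ℤ[q, z] ⊆ 𝕂(z)`. -/
def Rqz : Subring Kz := Subring.closure {algebraMap K Kz q, z}

/-- Evaluation at `z = 0` of a rational function in `z`. -/
def evalz0 : Kz → K := RatFunc.eval (RingHom.id K) 0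

/-! ### Auxiliary development -/

section Gens

/-- The `i`-th generator (0-indexed, `ℕ`-valued index), junk value `1` out of range. -/
def gg (n : ℕ) (i : ℕ) : BG n := if h : i < n - 1 then bgen ⟨i, h⟩ else 1

lemma gg_eq {n : ℕ} (i : ℕ) (h : i < n - 1) : gg n i = bgen ⟨i, h⟩ := dif_pos h

lemma gg_comm {n : ℕ} {i j : ℕ} (h : i + 2 ≤ j ∨ j + 2 ≤ i) :
    gg n i * gg n j = gg n j * gg n i := by
  unfold gg
  split_ifs with h1 h2 h2
  · exact bgen_comm ⟨i, h1⟩ ⟨j, h2⟩ h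
  · simp
  · simp
  · simp

lemma gg_braid {n : ℕ} {i : ℕ} (h : i + 1 < n - 1) :
    gg n i * gg n (i + 1) * gg n i = gg n (i + 1) * gg n i * gg n (i + 1) := by
  rw [gg_eq i (by omega), gg_eq (i + 1) h]
  exact bgen_braid ⟨i, by omega⟩ ⟨i + 1, h⟩ (Or.inl rfl)

/-- Product of a word of generators. -/
def P (n : ℕ) (l : List ℕ) : BG n := (l.map (gg n)).prod

@[simp] lemma P_nil {n : ℕ} : P n [] = 1 := rfl

@[simp] lemma P_cons {n : ℕ} (i : ℕ) (l : List ℕ) : P n (i :: l) = gg n i * P n l := by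
  simp [P]

@[simp] lemma P_append {n : ℕ} (l1 l2 : List ℕ) : P n (l1 ++ l2) = P n l1 * P n l2 := by
  simp [P]

@[simp] lemma P_single {n : ℕ} (i : ℕ) : P n [i] = gg n i := by simp [P]

lemma gg_comm_P {n : ℕ} {k : ℕ} {l : List ℕ} (h : ∀ j ∈ l, j + 2 ≤ k) :
    gg n k * P n l = P n l * gg n k := by
  induction l with
  | nil => simp
  | cons j t ih =>
    rw [P_cons, ← mul_assoc, gg_comm (Or.inr (h j (by simp))), mul_assoc,
      ih (fun x hx => h x (by simp [hx])), ← mul_assoc]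

end Gens

section Twist

def eps (n : ℕ) : ℕ → BG n
  | 0 => 1
  | j + 1 => eps n j * gg n j

def del (n : ℕ) : ℕ → BG n
  | 0 => 1
  | j + 1 => gg n j * del n j

def Del (n : ℕ) : ℕ → BG n
  | 0 => 1
  | j + 1 => Del n j * del n (j + 1)

@[simp] lemma eps_zero {n : ℕ} : eps n 0 = 1 := rfl
lemma eps_succ {n : ℕ} (j : ℕ) : eps n (j + 1) = eps n j * gg n j := rfl
@[simp] lemma del_zero {n : ℕ} : del n 0 = 1 := rfl
lemma del_succ {n : ℕ} (j : ℕ) : del n (j + 1) = gg n j * del n j := rfl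
@[simp] lemma Del_zero {n : ℕ} : Del n 0 = 1 := rfl
lemma Del_succ {n : ℕ} (j : ℕ) : Del n (j + 1) = Del n j * del n (j + 1) := rfl

lemma gg_comm_eps {n : ℕ} {i j : ℕ} (h : j + 1 ≤ i) :
    gg n i * eps n j = eps n j * gg n i := by
  induction j with
  | zero => simp
  | succ j ih =>
    rw [eps_succ, ← mul_assoc, ih (by omega), mul_assoc,
      gg_comm (Or.inr (by omega)), ← mul_assoc]

lemma gg_comm_del {n : ℕ} {i j : ℕ} (h : j + 1 ≤ i) :
    gg n i * del n j = del n j * gg n i := by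
  induction j with
  | zero => simp
  | succ j ih =>
    rw [del_succ, ← mul_assoc, gg_comm (Or.inr (by omega)), mul_assoc,
      ih (by omega), ← mul_assoc]

lemma gg_comm_Del {n : ℕ} {i j : ℕ} (h : j + 1 ≤ i) :
    gg n i * Del n j = Del n j * gg n i := by
  induction j with
  | zero => simp
  | succ j ih =>
    rw [Del_succ, ← mul_assoc, ih (by omega), mul_assoc,
      gg_comm_del (by omega), ← mul_assoc]

lemma eps_shift {n : ℕ} {i j : ℕ} (h : i + 2 ≤ j) (hn : j ≤ n - 1) :
    eps n j * gg n i = gg n (i + 1) * eps n j := by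
  induction j with
  | zero => omega
  | succ j ih =>
    by_cases hj : i + 2 ≤ j
    · rw [eps_succ, mul_assoc, gg_comm (i := j) (j := i) (Or.inr hj), ← mul_assoc,
        ih hj (by omega), mul_assoc]
    · have hji : j = i + 1 := by omega
      subst hji
      rw [eps_succ, eps_succ]
      calc eps n i * gg n i * gg n (i + 1) * gg n i
          = eps n i * (gg n i * gg n (i + 1) * gg n i) := by simp only [mul_assoc]
        _ = eps n i * (gg n (i + 1) * gg n i * gg n (i + 1)) := by rw [gg_braid (by omega)]
        _ = eps n i * gg n (i + 1) * (gg n i * gg n (i + 1)) := by simp only [mul_assoc]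
        _ = gg n (i + 1) * eps n i * (gg n i * gg n (i + 1)) := by
              rw [← gg_comm_eps (by omega)]
        _ = gg n (i + 1) * (eps n i * gg n i * gg n (i + 1)) := by simp only [mul_assoc]

lemma del_shift {n : ℕ} {i j : ℕ} (h1 : 1 ≤ i) (h2 : i + 1 ≤ j) (hn : j ≤ n - 1) :
    del n j * gg n i = gg n (i - 1) * del n j := by
  induction j with
  | zero => omega
  | succ j ih =>
    by_cases hj : i + 1 ≤ j
    · rw [del_succ, mul_assoc, ih hj (by omega), ← mul_assoc,
        gg_comm (i := j) (j := i - 1) (Or.inr (by omega)), mul_assoc]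
    · have hij : i = j := by omega
      subst hij
      obtain ⟨i', rfl⟩ : ∃ i', i = i' + 1 := ⟨i - 1, by omega⟩
      rw [del_succ, del_succ]
      calc gg n (i' + 1) * (gg n i' * del n i') * gg n (i' + 1)
          = gg n (i' + 1) * gg n i' * (del n i' * gg n (i' + 1)) := by simp only [mul_assoc]
        _ = gg n (i' + 1) * gg n i' * (gg n (i' + 1) * del n i') := by
              rw [← gg_comm_del (by omega)]
        _ = gg n (i' + 1) * gg n i' * gg n (i' + 1) * del n i' := by simp only [mul_assoc]
        _ = gg n i' * gg n (i' + 1) * gg n i' * del n i' := by rw [← gg_braid (by omega)]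
        _ = gg n (i' + 1 - 1) * (gg n (i' + 1) * (gg n i' * del n i')) := by
              simp only [Nat.add_sub_cancel]; simp only [mul_assoc]

lemma DelF {n : ℕ} (j : ℕ) : Del n (j + 1) = eps n (j + 1) * Del n j := by
  induction j with
  | zero => simp [Del_succ, del_succ, eps_succ]
  | succ j ih =>
    rw [Del_succ, eps_succ (j + 1)]
    calc Del n (j + 1) * del n (j + 2)
        = Del n (j + 1) * (gg n (j + 1) * del n (j + 1)) := by rw [del_succ]
      _ = eps n (j + 1) * Del n j * (gg n (j + 1) * del n (j + 1)) := by rw [ih]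
      _ = eps n (j + 1) * (Del n j * gg n (j + 1)) * del n (j + 1) := by simp only [mul_assoc]
      _ = eps n (j + 1) * (gg n (j + 1) * Del n j) * del n (j + 1) := by
            rw [← gg_comm_Del (by omega)]
      _ = eps n (j + 1) * gg n (j + 1) * (Del n j * del n (j + 1)) := by simp only [mul_assoc]
      _ = eps n (j + 1) * gg n (j + 1) * Del n (j + 1) := by rw [← Del_succ]

lemma Del_flip {n : ℕ} {j : ℕ} (hn : j ≤ n - 1) :
    ∀ {i : ℕ}, i + 1 ≤ j → Del n j * gg n i = gg n (j - 1 - i) * Del n j := by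
  induction j with
  | zero => omega
  | succ j ih =>
    intro i h
    by_cases hi : 1 ≤ i
    · rw [Del_succ, mul_assoc, del_shift hi (by omega) hn, ← mul_assoc,
        ih (by omega) (by omega), mul_assoc, ← Del_succ]
      have : j - 1 - (i - 1) = j + 1 - 1 - i := by omega
      rw [this]
    · have hi0 : i = 0 := by omega
      subst hi0
      by_cases hj : 1 ≤ j
      · rw [DelF j, mul_assoc, ih (by omega) (by omega)]
        have e1 : j - 1 - 0 = j - 1 := by omega
        rw [e1, ← mul_assoc, eps_shift (by omega) hn]
        have e2 : j - 1 + 1 = j := by omega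
        rw [e2, mul_assoc, ← DelF j]
        have e3 : j + 1 - 1 - 0 = j := by omega
        rw [e3]
      · have hj0 : j = 0 := by omega
        subst hj0
        simp [Del_succ, del_succ]

end Twist

section Iota

lemma iota_mul {n : ℕ} (x y : BG n) : ιHB (x * y) = ιHB x * ιHB y := by
  unfold ιHB
  rw [map_mul (MonoidAlgebra.of K (BG n)), map_mul]
  rfl

lemma iota_one {n : ℕ} : ιHB (1 : BG n) = 1 := by
  unfold ιHB
  rw [map_one (MonoidAlgebra.of K (BG n)), map_one]
  rfl

lemma iota_sq {n : ℕ} (i : Fin (n - 1)) :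
    ιHB (bgen i) * ιHB (bgen i) = (q - 1) • ιHB (bgen i) + q • (1 : HB n) := by
  have hrel : hrelB n ((MonoidAlgebra.of K (BG n) (bgen i)) ^ 2)
      ((q - 1) • MonoidAlgebra.of K (BG n) (bgen i) + q • 1) := ⟨i, rfl, rfl⟩
  have key := RingQuot.mkAlgHom_rel K hrel
  rw [pow_two, map_mul] at key
  simp only [map_add, map_smul, map_one] at key
  exact key

lemma hecke {n : ℕ} {i : ℕ} (h : i < n - 1) (x y : BG n) :
    ιHB (x * (gg n i * gg n i) * y)
      = (q - 1) • ιHB (x * gg n i * y) + q • ιHB (x * y) := by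
  rw [gg_eq i h]
  rw [iota_mul, iota_mul, iota_mul, iota_mul, iota_mul, iota_sq]
  simp only [mul_add, add_mul, mul_smul_comm, smul_mul_assoc, mul_one, mul_assoc]
  rw [iota_mul x y]

end Iota

section Trace

lemma inclB_P {n : ℕ} {l : List ℕ} (hl : ∀ i ∈ l, i < n - 1) :
    inclB (P n l) = P (n + 1) l := by
  induction l with
  | nil => simp [map_one]
  | cons i t ih =>
    rw [P_cons, map_mul, ih (fun x hx => hl x (by simp [hx])), P_cons]
    congr 1
    rw [gg_eq i (hl i (by simp))]
    rw [show inclB (bgen (⟨i, hl i (by simp)⟩ : Fin (n - 1)))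
        = bgen (Fin.castLE (by omega) ⟨i, hl i (by simp)⟩) from
      PresentedGroup.toGroup.of _]
    rw [gg_eq i (show i < (n + 1) - 1 by have := hl i (by simp); omega)]
    rfl

lemma Tlevel {T : TRBc} (hT : IsMarkovB T) {k : ℕ} (l : List ℕ) (hl : ∀ i ∈ l, i < k) :
    ∀ {nl : ℕ}, k ≤ nl → T nl (ιHB (P (nl + 1) l)) = T k (ιHB (P (k + 1) l)) := by
  intro nl hk
  induction nl, hk using Nat.le_induction with
  | base => rfl
  | succ nl hnl ih =>
    have e : P (nl + 1 + 1) l = inclB (P (nl + 1) l) :=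
      (inclB_P (n := nl + 1) (fun i hi => by have := hl i hi; omega)).symm
    rw [e, hT.2.1 nl (P (nl + 1) l), ih]

lemma Tmarkov {T : TRBc} (hT : IsMarkovB T) {k : ℕ} (l : List ℕ) (hl : ∀ i ∈ l, i < k) :
    T (k + 1) (ιHB (P (k + 1 + 1) l * gg (k + 1 + 1) k)) = z * T k (ιHB (P (k + 1) l)) := by
  have h2 := hT.2.2 k (P (k + 1) l)
  rw [inclB_P (n := k + 1) (fun i hi => by have := hl i hi; omega)] at h2
  rw [show bgen (lastGenB k) = gg (k + 1 + 1) k from (gg_eq k (by omega)).symm] at h2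
  exact h2

lemma Tconj {T : TRBc} (hT : IsMarkovB T) {nl : ℕ} (g x : BG (nl + 1)) :
    T nl (ιHB (g * x * g⁻¹)) = T nl (ιHB x) := by
  have key := hT.1 nl g (x * g⁻¹)
  rw [← mul_assoc] at key
  rw [key, mul_assoc, inv_mul_cancel, mul_one]

end Trace

section Flip

lemma flip_P {m : ℕ} {l : List ℕ} (hl : ∀ i ∈ l, i < m) :
    Del (m + 1) m * P (m + 1) l
      = P (m + 1) (l.map (fun i => m - 1 - i)) * Del (m + 1) m := by
  induction l with
  | nil => simp
  | cons i t ih =>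
    rw [P_cons, List.map_cons, P_cons, ← mul_assoc,
      Del_flip (by omega) (by have := hl i (by simp); omega), mul_assoc,
      ih (fun x hx => hl x (by simp [hx])), ← mul_assoc]

lemma Tflip {T : TRBc} (hT : IsMarkovB T) {m : ℕ} (l : List ℕ) (hl : ∀ i ∈ l, i < m) :
    T m (ιHB (P (m + 1) (l.map (fun i => m - 1 - i)))) = T m (ιHB (P (m + 1) l)) := by
  have h1 : P (m + 1) (l.map (fun i => m - 1 - i))
      = Del (m + 1) m * P (m + 1) l * (Del (m + 1) m)⁻¹ := by
    rw [flip_P hl, mul_inv_cancel_right]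
  rw [h1, Tconj hT]

lemma Tcyc {T : TRBc} (hT : IsMarkovB T) {m : ℕ} (l1 l2 : List ℕ) :
    T m (ιHB (P (m + 1) (l1 ++ l2))) = T m (ιHB (P (m + 1) (l2 ++ l1))) := by
  rw [P_append, P_append, hT.1 m (P (m + 1) l1) (P (m + 1) l2)]

lemma main1 {T : TRBc} (hT : IsMarkovB T) {m a : ℕ} (ha : 1 ≤ a) (ham : a ≤ m)
    (l1 l2 : List ℕ) (h1 : ∀ i ∈ l1, a ≤ i ∧ i < m) (h2 : ∀ i ∈ l2, a ≤ i ∧ i < m) :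
    T m (ιHB (P (m + 1) l1 * gg (m + 1) (a - 1) * P (m + 1) l2))
      = z * T m (ιHB (P (m + 1) l1 * P (m + 1) l2)) := by
  have hW : P (m + 1) l1 * gg (m + 1) (a - 1) * P (m + 1) l2
      = P (m + 1) (l1 ++ (a - 1) :: l2) := by
    simp [mul_assoc]
  have hW2 : P (m + 1) l1 * P (m + 1) l2 = P (m + 1) (l1 ++ l2) := (P_append _ _).symm
  rw [hW, hW2]
  have hlW : ∀ i ∈ l1 ++ (a - 1) :: l2, i < m := by
    intro i hi
    rcases List.mem_append.mp hi with h | h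
    · exact (h1 i h).2
    · rcases List.mem_cons.mp h with h | h
      · omega
      · exact (h2 i h).2
  have hl12 : ∀ i ∈ l1 ++ l2, i < m := by
    intro i hi
    rcases List.mem_append.mp hi with h | h
    exacts [(h1 i h).2, (h2 i h).2]
  rw [← Tflip hT _ hlW, ← Tflip hT _ hl12]
  have hmap1 : (l1 ++ (a - 1) :: l2).map (fun i => m - 1 - i)
      = (l1.map (fun i => m - 1 - i) ++ [m - a]) ++ l2.map (fun i => m - 1 - i) := by
    simp only [List.map_append, List.map_cons, List.append_assoc, List.cons_append,
      List.nil_append]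
    congr 2
    omega
  have hmap2 : (l1 ++ l2).map (fun i => m - 1 - i)
      = l1.map (fun i => m - 1 - i) ++ l2.map (fun i => m - 1 - i) := by
    simp [List.map_append]
  rw [hmap1, hmap2]
  set w1 := l1.map (fun i => m - 1 - i) with hw1
  set w2 := l2.map (fun i => m - 1 - i) with hw2
  have hbw : ∀ i ∈ w2 ++ w1, i < m - a := by
    intro i hi
    have : i ∈ w1 ∨ i ∈ w2 := by
      rcases List.mem_append.mp hi with h | h
      exacts [Or.inr h, Or.inl h]
    rcases this with h | h
    · obtain ⟨j, hj, rfl⟩ := List.mem_map.mp h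
      have := h1 j hj; omega
    · obtain ⟨j, hj, rfl⟩ := List.mem_map.mp h
      have := h2 j hj; omega
  rw [Tcyc hT (w1 ++ [m - a]) w2]
  have hassoc : w2 ++ (w1 ++ [m - a]) = (w2 ++ w1) ++ [m - a] := by
    simp [List.append_assoc]
  rw [hassoc]
  have hlev1 : ∀ i ∈ (w2 ++ w1) ++ [m - a], i < m - a + 1 := by
    intro i hi
    rcases List.mem_append.mp hi with h | h
    · have := hbw i h; omega
    · simp at h; omega
  rw [Tlevel hT _ hlev1 (show m - a + 1 ≤ m by omega)]
  have hsplit : P (m - a + 1 + 1) ((w2 ++ w1) ++ [m - a])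
      = P (m - a + 1 + 1) (w2 ++ w1) * gg (m - a + 1 + 1) (m - a) := by
    simp [mul_assoc]
  rw [hsplit, Tmarkov hT (w2 ++ w1) hbw]
  rw [← Tlevel hT (w2 ++ w1) (fun i hi => hbw i hi) (show m - a ≤ m by omega)]
  rw [Tcyc hT w2 w1, ← hmap2, Tflip hT _ hl12]

end Flip

section Span

/-- Words in generators `< k`. -/
def lowS (N k : ℕ) : Set (HB (N + 1)) :=
  {x | ∃ u : List ℕ, (∀ i ∈ u, i < k) ∧ x = ιHB (P (N + 1) u)}

/-- Words of the form `u · σ_k · v` with `u, v` in generators `< k`. -/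
def midS (N k : ℕ) : Set (HB (N + 1)) :=
  {x | ∃ u v : List ℕ, (∀ i ∈ u, i < k) ∧ (∀ i ∈ v, i < k) ∧
    x = ιHB (P (N + 1) u * gg (N + 1) k * P (N + 1) v)}

def WS (N k : ℕ) : Submodule K (HB (N + 1)) := Submodule.span K (lowS N k ∪ midS N k)

lemma split_first {a : ℕ} {l : List ℕ} (h : a ∈ l) :
    ∃ s t, l = s ++ a :: t ∧ a ∉ s := by
  induction l with
  | nil => simp at h
  | cons b t ih =>
    by_cases hb : b = a
    · exact ⟨[], t, by simp [hb], by simp⟩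
    · obtain ⟨s, t', rfl, hs⟩ := ih (by
        rcases List.mem_cons.mp h with h | h
        · exact absurd h.symm hb
        · exact h)
      refine ⟨b :: s, t', rfl, ?_⟩
      intro hmem
      rcases List.mem_cons.mp hmem with h' | h'
      · exact hb h'.symm
      · exact hs h'

lemma SP {N : ℕ} : ∀ k, k + 1 ≤ N → ∀ c (l : List ℕ), (∀ i ∈ l, i < k + 1) →
    l.count k ≤ c → ιHB (P (N + 1) l) ∈ WS N k := by
  intro k
  induction k using Nat.strong_induction_on with
  | _ k ihk =>
  intro hkN c
  induction c with
  | zero =>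
    intro l hl hc
    have hknot : k ∉ l := List.count_eq_zero.mp (Nat.le_zero.mp hc)
    refine Submodule.subset_span (Or.inl ⟨l, fun i hi => ?_, rfl⟩)
    have h1 := hl i hi
    have h2 : i ≠ k := fun h => hknot (h ▸ hi)
    omega
  | succ c ihc =>
    intro l hl hc
    by_cases hkl : k ∈ l
    · obtain ⟨l1, l2, rfl, hnl1⟩ := split_first hkl
      have hl1e : ∀ i ∈ l1, i < k := by
        intro i hi
        have h1 := hl i (by simp [hi])
        have h2 : i ≠ k := fun h => hnl1 (h ▸ hi)
        omega
      by_cases hkl2 : k ∈ l2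
      · obtain ⟨w, l3, rfl, hnw⟩ := split_first hkl2
        have hc3 : l3.count k + 1 ≤ c := by
          have e : (l1 ++ k :: (w ++ k :: l3)).count k = l3.count k + 2 := by
            simp [List.count_append, List.count_cons_self,
              List.count_eq_zero.mpr hnl1, List.count_eq_zero.mpr hnw]
          omega
        have hl3e : ∀ i ∈ l3, i < k + 1 := fun i hi => hl i (by simp [hi])
        have hwe' : ∀ i ∈ w, i < k ∧ i ≠ k := by
          intro i hi
          have h1 := hl i (by simp [hi])
          have h2 : i ≠ k := fun h => hnw (h ▸ hi)
          exact ⟨by omega, h2⟩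
        rcases Nat.eq_zero_or_pos k with rfl | hk1
        · -- k = 0 : l1 and w are empty
          have hl1nil : l1 = [] := by
            cases l1 with
            | nil => rfl
            | cons b t => exact absurd (hl1e b (by simp)) (by omega)
          have hwnil : w = [] := by
            cases w with
            | nil => rfl
            | cons b t => exact absurd ((hwe' b (by simp)).1) (by omega)
          subst hl1nil; subst hwnil
          have he : P (N + 1) (([] : List ℕ) ++ 0 :: (([] : List ℕ) ++ 0 :: l3))
              = 1 * (gg (N + 1) 0 * gg (N + 1) 0) * P (N + 1) l3 := by
            simp [mul_assoc]
          rw [he, hecke (by omega) 1 (P (N + 1) l3)]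
          have e1 : (1 : BG (N + 1)) * gg (N + 1) 0 * P (N + 1) l3 = P (N + 1) (0 :: l3) := by
            simp
          have e2 : (1 : BG (N + 1)) * P (N + 1) l3 = P (N + 1) l3 := one_mul _
          rw [e1, e2]
          refine Submodule.add_mem _ (Submodule.smul_mem _ _ ?_) (Submodule.smul_mem _ _ ?_)
          · refine ihc (0 :: l3) ?_ ?_
            · intro i hi
              rcases List.mem_cons.mp hi with h | h
              · omega
              · exact hl3e i h
            · have e3 : (0 :: l3).count 0 = l3.count 0 + 1 := List.count_cons_self
              omega
          · exact ihc l3 hl3e (by omega)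
        · -- k ≥ 1
          obtain ⟨k', rfl⟩ : ∃ k', k = k' + 1 := ⟨k - 1, by omega⟩
          have hspan : ιHB (P (N + 1) w) ∈ WS N k' :=
            ihk k' (by omega) (by omega) (w.count k') w (fun i hi => (hwe' i hi).1) le_rfl
          have hgoal : P (N + 1) (l1 ++ (k' + 1) :: (w ++ (k' + 1) :: l3))
              = P (N + 1) l1 * (gg (N + 1) (k' + 1) * P (N + 1) w * gg (N + 1) (k' + 1))
                * P (N + 1) l3 := by
            simp [mul_assoc]
          rw [hgoal]
          have hsplit2 : ιHB (P (N + 1) l1 * (gg (N + 1) (k' + 1) * P (N + 1) w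
                * gg (N + 1) (k' + 1)) * P (N + 1) l3)
              = ιHB (P (N + 1) l1) * (ιHB (gg (N + 1) (k' + 1)) * ιHB (P (N + 1) w)
                * ιHB (gg (N + 1) (k' + 1))) * ιHB (P (N + 1) l3) := by
            simp only [iota_mul]
          rw [hsplit2]
          refine Submodule.span_induction
            (p := fun x _ => ιHB (P (N + 1) l1) * (ιHB (gg (N + 1) (k' + 1)) * x
              * ιHB (gg (N + 1) (k' + 1))) * ιHB (P (N + 1) l3) ∈ WS N (k' + 1))
            ?_ ?_ ?_ ?_ hspan
          · rintro x (⟨u, hu, rfl⟩ | ⟨u, v, hu, hv, rfl⟩)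
            · -- low word inserted between the two top generators
              have hcomm : gg (N + 1) (k' + 1) * P (N + 1) u
                  = P (N + 1) u * gg (N + 1) (k' + 1) :=
                gg_comm_P (fun j hj => by have := hu j hj; omega)
              have egrp : ιHB (P (N + 1) l1) * (ιHB (gg (N + 1) (k' + 1)) * ιHB (P (N + 1) u)
                    * ιHB (gg (N + 1) (k' + 1))) * ιHB (P (N + 1) l3)
                  = ιHB ((P (N + 1) l1 * P (N + 1) u)
                    * (gg (N + 1) (k' + 1) * gg (N + 1) (k' + 1)) * P (N + 1) l3) := by
                simp only [← iota_mul]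
                congr 1
                rw [hcomm]
                simp only [mul_assoc]
              rw [egrp, hecke (by omega) _ _]
              have e1 : P (N + 1) l1 * P (N + 1) u * gg (N + 1) (k' + 1) * P (N + 1) l3
                  = P (N + 1) (l1 ++ u ++ (k' + 1) :: l3) := by simp [mul_assoc]
              have e2 : P (N + 1) l1 * P (N + 1) u * P (N + 1) l3
                  = P (N + 1) (l1 ++ u ++ l3) := by simp [mul_assoc]
              rw [e1, e2]
              have hbound1 : ∀ i ∈ l1 ++ u ++ (k' + 1) :: l3, i < k' + 1 + 1 := by
                intro i hi
                rcases List.mem_append.mp hi with h | h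
                · rcases List.mem_append.mp h with h | h
                  · have := hl1e i h; omega
                  · have := hu i h; omega
                · rcases List.mem_cons.mp h with h | h
                  · omega
                  · have := hl3e i h; omega
              have hbound2 : ∀ i ∈ l1 ++ u ++ l3, i < k' + 1 + 1 := by
                intro i hi
                rcases List.mem_append.mp hi with h | h
                · rcases List.mem_append.mp h with h | h
                  · have := hl1e i h; omega
                  · have := hu i h; omega
                · have := hl3e i h; omega
              have hnotu : (k' + 1) ∉ u := fun h => by have := hu _ h; omega
              have hcnt1 : (l1 ++ u ++ (k' + 1) :: l3).count (k' + 1) ≤ c := by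
                simp [List.count_append, List.count_cons_self,
                  List.count_eq_zero.mpr hnl1, List.count_eq_zero.mpr hnotu]
                omega
              have hcnt2 : (l1 ++ u ++ l3).count (k' + 1) ≤ c := by
                simp [List.count_append,
                  List.count_eq_zero.mpr hnl1, List.count_eq_zero.mpr hnotu]
                omega
              exact Submodule.add_mem _
                (Submodule.smul_mem _ _ (ihc _ hbound1 hcnt1))
                (Submodule.smul_mem _ _ (ihc _ hbound2 hcnt2))
            · -- word u σ_{k'} v inserted between the two top generators
              have hcommu : gg (N + 1) (k' + 1) * P (N + 1) u
                  = P (N + 1) u * gg (N + 1) (k' + 1) :=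
                gg_comm_P (fun j hj => by have := hu j hj; omega)
              have hcommv : gg (N + 1) (k' + 1) * P (N + 1) v
                  = P (N + 1) v * gg (N + 1) (k' + 1) :=
                gg_comm_P (fun j hj => by have := hv j hj; omega)
              have hg : gg (N + 1) (k' + 1) * (P (N + 1) u * gg (N + 1) k' * P (N + 1) v)
                    * gg (N + 1) (k' + 1)
                  = P (N + 1) u * (gg (N + 1) k' * gg (N + 1) (k' + 1) * gg (N + 1) k')
                    * P (N + 1) v := by
                calc gg (N + 1) (k' + 1) * (P (N + 1) u * gg (N + 1) k' * P (N + 1) v)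
                      * gg (N + 1) (k' + 1)
                    = (gg (N + 1) (k' + 1) * P (N + 1) u) * gg (N + 1) k'
                      * (P (N + 1) v * gg (N + 1) (k' + 1)) := by simp only [mul_assoc]
                  _ = (P (N + 1) u * gg (N + 1) (k' + 1)) * gg (N + 1) k'
                      * (gg (N + 1) (k' + 1) * P (N + 1) v) := by rw [hcommu, ← hcommv]
                  _ = P (N + 1) u * (gg (N + 1) (k' + 1) * gg (N + 1) k'
                      * gg (N + 1) (k' + 1)) * P (N + 1) v := by simp only [mul_assoc]
                  _ = P (N + 1) u * (gg (N + 1) k' * gg (N + 1) (k' + 1) * gg (N + 1) k')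
                      * P (N + 1) v := by rw [← gg_braid (by omega)]
              have egrp : ιHB (P (N + 1) l1) * (ιHB (gg (N + 1) (k' + 1))
                    * ιHB (P (N + 1) u * gg (N + 1) k' * P (N + 1) v)
                    * ιHB (gg (N + 1) (k' + 1))) * ιHB (P (N + 1) l3)
                  = ιHB (P (N + 1) (l1 ++ u ++ k' :: (k' + 1) :: k' :: (v ++ l3))) := by
                simp only [← iota_mul]
                congr 1
                calc P (N + 1) l1 * (gg (N + 1) (k' + 1)
                      * (P (N + 1) u * gg (N + 1) k' * P (N + 1) v)
                      * gg (N + 1) (k' + 1)) * P (N + 1) l3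
                    = P (N + 1) l1 * (P (N + 1) u * (gg (N + 1) k' * gg (N + 1) (k' + 1)
                      * gg (N + 1) k') * P (N + 1) v) * P (N + 1) l3 := by rw [hg]
                  _ = P (N + 1) (l1 ++ u ++ k' :: (k' + 1) :: k' :: (v ++ l3)) := by
                      simp [mul_assoc]
              rw [egrp]
              have hbound : ∀ i ∈ l1 ++ u ++ k' :: (k' + 1) :: k' :: (v ++ l3),
                  i < k' + 1 + 1 := by
                intro i hi
                rcases List.mem_append.mp hi with h | h
                · rcases List.mem_append.mp h with h | h
                  · have := hl1e i h; omega
                  · have := hu i h; omega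
                · rcases List.mem_cons.mp h with h | h
                  · omega
                  · rcases List.mem_cons.mp h with h | h
                    · omega
                    · rcases List.mem_cons.mp h with h | h
                      · omega
                      · rcases List.mem_append.mp h with h | h
                        · have := hv i h; omega
                        · have := hl3e i h; omega
              have hnotu : (k' + 1) ∉ u := fun h => by have := hu _ h; omega
              have hnotv : (k' + 1) ∉ v := fun h => by have := hv _ h; omega
              have hcnt : (l1 ++ u ++ k' :: (k' + 1) :: k' :: (v ++ l3)).count (k' + 1)
                  ≤ c := by
                simp [List.count_append, List.count_cons,
                  List.count_eq_zero.mpr hnl1, List.count_eq_zero.mpr hnotu,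
                  List.count_eq_zero.mpr hnotv]
                omega
              exact ihc _ hbound hcnt
          · simp only [mul_zero, zero_mul]
            exact (WS N (k' + 1)).zero_mem
          · intro x y hx hy ihx ihy
            simp only [mul_add, add_mul]
            exact Submodule.add_mem _ ihx ihy
          · intro r x hx ihx
            simp only [mul_smul_comm, smul_mul_assoc]
            exact Submodule.smul_mem _ _ ihx
      · -- single occurrence of k
        have hl2e : ∀ i ∈ l2, i < k := by
          intro i hi
          have h1 := hl i (by simp [hi])
          have h2 : i ≠ k := fun h => hkl2 (h ▸ hi)
          omega
        refine Submodule.subset_span (Or.inr ⟨l1, l2, hl1e, hl2e, ?_⟩)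
        have e : P (N + 1) (l1 ++ k :: l2) = P (N + 1) l1 * gg (N + 1) k * P (N + 1) l2 := by
          simp [mul_assoc]
        rw [e]
    · refine Submodule.subset_span (Or.inl ⟨l, fun i hi => ?_, rfl⟩)
      have h1 := hl i hi
      have h2 : i ≠ k := fun h => hkl (h ▸ hi)
      omega

end Span

section Poly

lemma L44 {T : TRBc} (hT : IsMarkovB T) (hnorm : T 0 1 = 1) :
    ∀ k (l : List ℕ), (∀ i ∈ l, i < k) →
      ∃ p : Polynomial K, T k (ιHB (P (k + 1) l)) = algebraMap (Polynomial K) Kz p := by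
  intro k
  induction k with
  | zero =>
    intro l hl
    have hnil : l = [] := by
      cases l with
      | nil => rfl
      | cons b t => exact absurd (hl b (by simp)) (by omega)
    subst hnil
    exact ⟨1, by rw [P_nil, iota_one, hnorm, map_one]⟩
  | succ k ihk =>
    intro l hl
    have hsp : ιHB (P (k + 1 + 1) l) ∈ WS (k + 1) k :=
      SP k (by omega) (l.count k) l hl le_rfl
    refine Submodule.span_induction
      (p := fun x _ => ∃ p : Polynomial K, T (k + 1) x = algebraMap (Polynomial K) Kz p)
      ?_ ?_ ?_ ?_ hsp
    · rintro x (⟨u, hu, rfl⟩ | ⟨u, v, hu, hv, rfl⟩)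
      · obtain ⟨p, hp⟩ := ihk u hu
        exact ⟨p, by rw [Tlevel hT u hu (by omega), hp]⟩
      · have huv : ∀ i ∈ v ++ u, i < k := by
          intro i hi
          rcases List.mem_append.mp hi with h | h
          exacts [hv i h, hu i h]
        obtain ⟨p, hp⟩ := ihk (v ++ u) huv
        refine ⟨Polynomial.X * p, ?_⟩
        calc T (k + 1) (ιHB (P (k + 1 + 1) u * gg (k + 1 + 1) k * P (k + 1 + 1) v))
            = T (k + 1) (ιHB (P (k + 1 + 1) v * (P (k + 1 + 1) u * gg (k + 1 + 1) k))) :=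
              hT.1 (k + 1) (P (k + 1 + 1) u * gg (k + 1 + 1) k) (P (k + 1 + 1) v)
          _ = T (k + 1) (ιHB (P (k + 1 + 1) (v ++ u) * gg (k + 1 + 1) k)) := by
              rw [P_append]; simp only [mul_assoc]
          _ = z * T k (ιHB (P (k + 1) (v ++ u))) := Tmarkov hT (v ++ u) huv
          _ = algebraMap (Polynomial K) Kz (Polynomial.X * p) := by
              rw [hp, map_mul, RatFunc.algebraMap_X]; rfl
    · exact ⟨0, by simp⟩
    · rintro x y hx hy ⟨p, hp⟩ ⟨p', hp'⟩
      exact ⟨p + p', by rw [map_add, hp, hp', map_add]⟩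
    · rintro r x hx ⟨p, hp⟩
      refine ⟨Polynomial.C r * p, ?_⟩
      rw [map_smul, hp, map_mul]
      have e1 : algebraMap (Polynomial K) Kz (Polynomial.C r) = algebraMap K Kz r := by
        rw [IsScalarTower.algebraMap_apply K (Polynomial K) Kz r, Polynomial.algebraMap_eq]
      have e2 : r • algebraMap (Polynomial K) Kz p
          = algebraMap K Kz r * algebraMap (Polynomial K) Kz p := by
        exact Algebra.smul_def (A := Kz) r _
      rw [e2, e1]

end Poly

section Extract

lemma extract {m a : ℕ} {α : BG (m + 1)}
    (hα : α ∈ Submonoid.closure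
      {x : BG (m + 1) | ∃ i : Fin ((m + 1) - 1), a ≤ (i : ℕ) ∧ x = bgen i}) :
    ∃ l : List ℕ, (∀ i ∈ l, a ≤ i ∧ i < m) ∧ α = P (m + 1) l := by
  induction hα using Submonoid.closure_induction with
  | mem x hx =>
    obtain ⟨i, hi, rfl⟩ := hx
    refine ⟨[(i : ℕ)], ?_, ?_⟩
    · intro j hj
      simp only [List.mem_singleton] at hj
      subst hj
      exact ⟨hi, by have := i.isLt; omega⟩
    · rw [P_single, gg_eq _ (show (i : ℕ) < (m + 1) - 1 from i.isLt), Fin.eta]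
  | one => exact ⟨[], by simp, by simp⟩
  | mul x y hx hy ihx ihy =>
    obtain ⟨lx, hlx, rfl⟩ := ihx
    obtain ⟨ly, hly, rfl⟩ := ihy
    refine ⟨lx ++ ly, ?_, by rw [P_append]⟩
    intro i hi
    rcases List.mem_append.mp hi with h | h
    exacts [hlx i h, hly i h]

end Extract

/-- Let `n = m+1 ≥ 2`, `1 ≤ a ≤ n-1`, and let `α, α'` lie in the
submonoid of `B_n` generated by `σ_{a+1}, …, σ_{n-1}`.  Then `tr⁰_n(α σ_a α') = z·tr⁰_n(α α')`;
consequently the evaluation at `z = 0` of `tr⁰_n(α σ_a α')` is `0` and the evaluation at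
`z = 0` of `tr⁰_n(α σ_a² α')` is `q` times that of `tr⁰_n(α α')`. -/
theorem statement18 (T : TRBc) (hT : IsMarkovB T) (hnorm : T 0 1 = 1)
    (m : ℕ) (hm : 1 ≤ m) (a : ℕ) (ha : 1 ≤ a) (ham : a ≤ m)
    (α α' : BG (m + 1))
    (hα : α ∈ Submonoid.closure {x : BG (m + 1) | ∃ i : Fin ((m + 1) - 1), a ≤ (i : ℕ) ∧ x = bgen i})
    (hα' : α' ∈ Submonoid.closure {x : BG (m + 1) | ∃ i : Fin ((m + 1) - 1), a ≤ (i : ℕ) ∧ x = bgen i}) :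
    T m (ιHB (α * bgen (⟨a - 1, by omega⟩ : Fin ((m + 1) - 1)) * α'))
        = z * T m (ιHB (α * α')) ∧
    evalz0 (T m (ιHB (α * bgen (⟨a - 1, by omega⟩ : Fin ((m + 1) - 1)) * α'))) = 0 ∧
    evalz0 (T m (ιHB (α * (bgen (⟨a - 1, by omega⟩ : Fin ((m + 1) - 1)) *
          bgen (⟨a - 1, by omega⟩ : Fin ((m + 1) - 1))) * α')))
      = q * evalz0 (T m (ιHB (α * α'))) := by
  obtain ⟨l1, h1, hA⟩ := extract hα
  obtain ⟨l2, h2, hB⟩ := extract hα'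
  subst hA; subst hB
  have hgg : bgen (⟨a - 1, by omega⟩ : Fin ((m + 1) - 1)) = gg (m + 1) (a - 1) :=
    (gg_eq (a - 1) (by omega)).symm
  rw [hgg]
  have part1 := main1 hT ha ham l1 l2 h1 h2
  have hl12 : ∀ i ∈ l1 ++ l2, i < m := by
    intro i hi
    rcases List.mem_append.mp hi with h | h
    exacts [(h1 i h).2, (h2 i h).2]
  obtain ⟨p, hp⟩ := L44 hT hnorm m (l1 ++ l2) hl12
  have hp' : T m (ιHB (P (m + 1) l1 * P (m + 1) l2)) = algebraMap (Polynomial K) Kz p := by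
    rw [← P_append]; exact hp
  have hC : ∀ c : K, algebraMap (Polynomial K) Kz (Polynomial.C c) = algebraMap K Kz c := by
    intro c
    rw [IsScalarTower.algebraMap_apply K (Polynomial K) Kz c, Polynomial.algebraMap_eq]
  refine ⟨part1, ?_, ?_⟩
  · rw [part1, hp']
    have e : z * algebraMap (Polynomial K) Kz p
        = algebraMap (Polynomial K) Kz (Polynomial.X * p) := by
      rw [map_mul, RatFunc.algebraMap_X]; rfl
    rw [e]
    unfold evalz0
    rw [RatFunc.eval_algebraMap]
    simp
  · rw [hecke (by omega) (P (m + 1) l1) (P (m + 1) l2)]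
    rw [map_add, map_smul, map_smul, part1, hp']
    have s1 : (q - 1) • (z * algebraMap (Polynomial K) Kz p)
        = algebraMap K Kz (q - 1) * (z * algebraMap (Polynomial K) Kz p) := by
      exact Algebra.smul_def (A := Kz) _ _
    have s2 : q • algebraMap (Polynomial K) Kz p
        = algebraMap K Kz q * algebraMap (Polynomial K) Kz p := by
      exact Algebra.smul_def (A := Kz) _ _
    have eAll : (q - 1) • (z * algebraMap (Polynomial K) Kz p)
          + q • algebraMap (Polynomial K) Kz p
        = algebraMap (Polynomial K) Kz
            (Polynomial.C (q - 1) * (Polynomial.X * p) + Polynomial.C q * p) := by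
      rw [map_add, map_mul, map_mul, map_mul, RatFunc.algebraMap_X, hC, hC, s1, s2]
      rfl
    rw [eAll]
    unfold evalz0
    rw [RatFunc.eval_algebraMap, RatFunc.eval_algebraMap]
    simp [Polynomial.eval₂_add, Polynomial.eval₂_mul]
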